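/- Let d ≥ 1 be an integer and let c > 1/d be the per-unit cost of curing rate. (i) The risk-neutral cost J(δ) = 1 − δ/d + cδ is strictly increasing on [0, 1/c], so its unique minimizer on [0, 1/c] is δ^N = 0, with minimum value 1. (ii) Let w : [0,1] → ℝ be continuous on [0,1], differentiable on (0,1), strictly increasing, with w(0) = 0, w(1) = 1, and suppose there exists x_m ∈ (0,1) such that w is strictly concave on [0, x_m], strictly convex on [x_m, 1], w'(x_m) < 1, and w'(x) → ∞ as x → 0⁺ and as x → 1⁻. Then there exists a unique X ∈ (x_m, 1) with w'(X) = dc, and the curing rate δ^W := min{1/c, d(1 − X)} minimizes the perceived cost J^w(δ) = w(1 − δ/d) + cδ over [0, 1/c], i.e. J^w(δ^W) ≤ J^w(δ) for every δ ∈ [0, 1/c]. -/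

import Mathlib

set_option maxHeartbeats 1000000


/-- In a degree-regular network of degree `d ≥ 1` with per-unit
curing cost `c > 1/d`, the endemic infection probability is `x_d = 1 - δ/d` for
`δ ∈ [0, 1/c]`.
(i) The risk-neutral cost `J(δ) = 1 - δ/d + cδ` is strictly increasing on `[0, 1/c]`,
so its unique minimizer there is `δ^N = 0`, with minimum value `1`.
(ii) For an inverse-S-shaped weighting function `w` with derivative `w'` (inflection
point `x_m`, `w'(x_m) < 1`, unbounded derivative at both endpoints), there is a unique
`X ∈ (x_m, 1)` with `w'(X) = dc`, and `δ^W = min{1/c, d(1-X)}` minimizes the perceived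
cost `J^w(δ) = w(1 - δ/d) + cδ` over `[0, 1/c]`. -/
theorem degree_regular_optimal_curing_rates
    (d : ℕ) (hd : 1 ≤ d) (c : ℝ) (hc : 1 / (d : ℝ) < c)
    (w w' : ℝ → ℝ)
    (hcont : ContinuousOn w (Set.Icc 0 1))
    (hderiv : ∀ x ∈ Set.Ioo (0 : ℝ) 1, HasDerivAt w (w' x) x)
    (hmono : StrictMonoOn w (Set.Icc 0 1))
    (hw0 : w 0 = 0) (hw1 : w 1 = 1)
    (xm : ℝ) (hxm : xm ∈ Set.Ioo (0 : ℝ) 1)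
    (hconc : StrictConcaveOn ℝ (Set.Icc 0 xm) w)
    (hconv : StrictConvexOn ℝ (Set.Icc xm 1) w)
    (hxm1 : w' xm < 1)
    (hlim0 : Filter.Tendsto w' (nhdsWithin 0 (Set.Ioi 0)) Filter.atTop)
    (hlim1 : Filter.Tendsto w' (nhdsWithin 1 (Set.Iio 1)) Filter.atTop) :
    (StrictMonoOn (fun δ : ℝ => 1 - δ / (d : ℝ) + c * δ) (Set.Icc 0 (1 / c)) ∧
      (∀ δ ∈ Set.Icc (0 : ℝ) (1 / c), δ ≠ 0 → 1 < 1 - δ / (d : ℝ) + c * δ)) ∧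
    (∃ X ∈ Set.Ioo xm (1 : ℝ), w' X = (d : ℝ) * c ∧
      (∀ Y ∈ Set.Ioo xm (1 : ℝ), w' Y = (d : ℝ) * c → Y = X) ∧
      (∀ δ ∈ Set.Icc (0 : ℝ) (1 / c),
        w (1 - min (1 / c) ((d : ℝ) * (1 - X)) / (d : ℝ))
            + c * min (1 / c) ((d : ℝ) * (1 - X))
          ≤ w (1 - δ / (d : ℝ)) + c * δ)) := by
  have hD1 : (1 : ℝ) ≤ (d : ℝ) := by exact_mod_cast hd
  have hD0 : (0 : ℝ) < (d : ℝ) := lt_of_lt_of_le one_pos hD1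
  have hc0 : 0 < c := lt_trans (by positivity) hc
  set D : ℝ := (d : ℝ) with hDdef
  set k : ℝ := D * c with hkdef
  have hk1 : 1 < k := by
    rw [div_lt_iff₀ hD0] at hc
    rw [hkdef]; linarith [hc]
  have hk0 : 0 < k := lt_trans one_pos hk1
  have he : ∀ t : ℝ, 1 - t / D + c * t = 1 + (c - 1 / D) * t := by
    intro t; field_simp; ring
  have hp : 0 < c - 1 / D := sub_pos.2 hc
  constructor
  · constructor
    · intro x hx y hy hxy
      simp only [he]
      nlinarith
    · intro δ hδ hδ0
      have h0 : 0 < δ := lt_of_le_of_ne hδ.1 (Ne.symm hδ0)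
      rw [he]
      nlinarith
  -- Part (ii)
  · set a : ℝ := 1 - 1 / k with hadef
    have hk' : 1 / k < 1 := by rw [div_lt_one hk0]; exact hk1
    have hk'' : 0 < 1 / k := by positivity
    have ha0 : 0 < a := by rw [hadef]; linarith
    have ha1 : a < 1 := by rw [hadef]; linarith
    -- existence of X via Darboux
    have hy : ∃ y, xm < y ∧ y < 1 ∧ k < w' y := by
      have h1 : ∀ᶠ x in nhdsWithin 1 (Set.Iio 1), k < w' x := hlim1.eventually_gt_atTop k
      have h2 : ∀ᶠ x in nhdsWithin 1 (Set.Iio 1), xm < x :=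
        eventually_nhdsWithin_of_eventually_nhds (eventually_gt_nhds hxm.2)
      have h3 : ∀ᶠ x : ℝ in nhdsWithin 1 (Set.Iio 1), x < 1 :=
        eventually_mem_nhdsWithin.mono (fun x hx => hx)
      obtain ⟨y, hy1, hy2, hy3⟩ := (h2.and (h3.and h1)).exists
      exact ⟨y, hy1, hy2, hy3⟩
    obtain ⟨y, hy1, hy2, hy3⟩ := hy
    have hsub : Set.Icc xm y ⊆ Set.Ioo (0:ℝ) 1 := fun t ht =>
      ⟨lt_of_lt_of_le hxm.1 ht.1, lt_of_le_of_lt ht.2 hy2⟩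
    have hDarboux : k ∈ w' '' Set.Ioo xm y := by
      apply exists_hasDerivWithinAt_eq_of_gt_of_lt (le_of_lt hy1)
      · intro x hx
        exact (hderiv x (hsub hx)).hasDerivWithinAt
      · exact lt_trans hxm1 hk1
      · exact hy3
    obtain ⟨X, hXmem', hXk⟩ := hDarboux
    have hX : X ∈ Set.Ioo xm 1 := ⟨hXmem'.1, lt_trans hXmem'.2 hy2⟩
    have hXIcc : X ∈ Set.Icc xm 1 := ⟨le_of_lt hX.1, le_of_lt hX.2⟩
    have hXIoo01 : X ∈ Set.Ioo (0:ℝ) 1 := ⟨lt_trans hxm.1 hX.1, hX.2⟩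
    have hderivX : HasDerivAt w (w' X) X := hderiv X hXIoo01
    refine ⟨X, hX, hXk, ?_, ?_⟩
    · -- uniqueness
      intro Y hY hYk
      by_contra hne
      have hYIcc : Y ∈ Set.Icc xm 1 := ⟨le_of_lt hY.1, le_of_lt hY.2⟩
      have hderivY : HasDerivAt w (w' Y) Y := hderiv Y ⟨lt_trans hxm.1 hY.1, hY.2⟩
      rcases lt_or_gt_of_ne hne with h | h
      · have h1 : w' Y < slope w Y X := hconv.lt_slope_of_hasDerivAt hYIcc hXIcc h hderivY
        have h2 : slope w Y X < w' X := hconv.slope_lt_of_hasDerivAt hYIcc hXIcc h hderivX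
        rw [hYk, hXk] at *
        linarith
      · have h1 : w' X < slope w X Y := hconv.lt_slope_of_hasDerivAt hXIcc hYIcc h hderivX
        have h2 : slope w X Y < w' Y := hconv.slope_lt_of_hasDerivAt hXIcc hYIcc h hderivY
        rw [hYk, hXk] at *
        linarith
    · -- minimization
      set g : ℝ → ℝ := fun t => w t - k * t with hgdef
      have hXltg : ∀ x ∈ Set.Icc xm 1, g X ≤ g x := by
        intro x hx
        rcases lt_trichotomy x X with h | h | h
        · have h1 : slope w x X < w' X := hconv.slope_lt_of_hasDerivAt hx hXIcc h hderivX
          rw [hXk, slope_def_field] at h1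
          rw [div_lt_iff₀ (sub_pos.2 h)] at h1
          simp only [hgdef]
          nlinarith
        · rw [h]
        · have h1 : w' X < slope w X x := hconv.lt_slope_of_hasDerivAt hXIcc hx h hderivX
          rw [hXk, slope_def_field] at h1
          rw [lt_div_iff₀ (sub_pos.2 h)] at h1
          simp only [hgdef]
          nlinarith
      have hga : g a = w a - k + 1 := by
        simp only [hgdef, hadef]
        have : k * (1 - 1 / k) = k - 1 := by field_simp
        rw [this]; ring
      have hwa : 0 < w a := by
        have := hmono (Set.mem_Icc.2 ⟨le_refl (0:ℝ), zero_le_one⟩)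
          (Set.mem_Icc.2 ⟨le_of_lt ha0, le_of_lt ha1⟩) ha0
        rwa [hw0] at this
      have hg1 : g 1 = 1 - k := by simp [hgdef, hw1]
      have hgX1 : g X ≤ g 1 := hXltg 1 ⟨le_of_lt hxm.2, le_refl 1⟩
      have hgaX : g X ≤ g a := by
        rw [hga]; rw [hg1] at hgX1; linarith
      -- the key minimization on [a,1]
      have gmin : ∀ x ∈ Set.Icc a 1, g (max a X) ≤ g x := by
        intro x hx
        rcases le_total X a with hXa | haX
        · rw [max_eq_left hXa]
          rcases eq_or_lt_of_le hx.1 with h | h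
          · rw [← h]
          · -- a < x ≤ 1; show slope w a x > k
            have haIcc : a ∈ Set.Icc xm 1 := ⟨le_trans (le_of_lt hX.1) hXa, le_of_lt ha1⟩
            have hxIcc : x ∈ Set.Icc xm 1 := ⟨le_trans haIcc.1 hx.1, hx.2⟩
            have hderiva : HasDerivAt w (w' a) a := hderiv a ⟨ha0, ha1⟩
            have hka : k ≤ w' a := by
              rcases eq_or_lt_of_le hXa with hXa' | hXa'
              · rw [← hXa', hXk]
              · have h1 : w' X < slope w X a := hconv.lt_slope_of_hasDerivAt hXIcc haIcc hXa' hderivX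
                have h2 : slope w X a < w' a := hconv.slope_lt_of_hasDerivAt hXIcc haIcc hXa' hderiva
                rw [hXk] at h1; linarith
            have h1 : w' a < slope w a x := hconv.lt_slope_of_hasDerivAt haIcc hxIcc h hderiva
            have h2 : k < slope w a x := lt_of_le_of_lt hka h1
            rw [slope_def_field, lt_div_iff₀ (sub_pos.2 h)] at h2
            simp only [hgdef]
            nlinarith
        · rw [max_eq_right haX]
          rcases le_total xm x with hxmx | hxxm
          · exact hXltg x ⟨hxmx, hx.2⟩
          · -- a ≤ x ≤ xm : concavity
            have haxm : a ≤ xm := le_trans hx.1 hxxm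
            have hwconc : ConcaveOn ℝ (Set.Icc a xm) w :=
              hconc.concaveOn.subset (Set.Icc_subset_Icc (le_of_lt ha0) le_rfl) (convex_Icc _ _)
            have hgconc : ConcaveOn ℝ (Set.Icc a xm) g := by
              refine ⟨convex_Icc _ _, fun u hu v hv p q hp hq hpq => ?_⟩
              have := hwconc.2 hu hv hp hq hpq
              simp only [smul_eq_mul, hgdef] at this ⊢
              nlinarith
            have hseg : x ∈ segment ℝ a xm := by
              rw [segment_eq_Icc haxm]; exact ⟨hx.1, hxxm⟩
            have hmin : min (g a) (g xm) ≤ g x :=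
              hgconc.ge_on_segment (Set.left_mem_Icc.2 haxm) (Set.right_mem_Icc.2 haxm) hseg
            have hgxm : g X ≤ g xm := hXltg xm ⟨le_refl xm, le_of_lt hxm.2⟩
            calc g X ≤ min (g a) (g xm) := le_min hgaX hgxm
            _ ≤ g x := hmin
      -- translate back to δ
      intro δ hδ
      set x : ℝ := 1 - δ / D with hxdef
      have hck : 1 / c / D = 1 / k := by
        rw [hkdef, div_div, mul_comm]
      have hxa : a ≤ x := by
        have h2 : δ / D ≤ (1 / c) / D := by
          gcongr
          exact hδ.2
        rw [hck] at h2
        rw [hxdef, hadef]; linarith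
      have hx1 : x ≤ 1 := by
        have : 0 ≤ δ / D := div_nonneg hδ.1 (le_of_lt hD0)
        simp only [hxdef]; linarith
      have hcδ : c * δ = k * (1 - x) := by
        simp only [hxdef, hkdef]
        field_simp
        ring
      set δW : ℝ := min (1 / c) (D * (1 - X)) with hδWdef
      have hxW : 1 - δW / D = max a X := by
        rcases le_total (1 / c) (D * (1 - X)) with h | h
        · rw [hδWdef, min_eq_left h]
          have hXa : X ≤ a := by
            have h3 : 1 / c / D ≤ 1 - X := by
              rw [div_le_iff₀ hD0]; linarith
            rw [hck] at h3
            rw [hadef]; linarith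
          rw [max_eq_left hXa, hadef, hkdef]
          field_simp
        · rw [hδWdef, min_eq_right h]
          have haX : a ≤ X := by
            have h3 : 1 - X ≤ 1 / c / D := by
              rw [le_div_iff₀ hD0]; linarith
            rw [hck] at h3
            rw [hadef]; linarith
          rw [max_eq_right haX]
          field_simp
          ring
      have hcδW : c * δW = k * (1 - (1 - δW / D)) := by
        rw [hkdef]; field_simp; ring
      have hmem : x ∈ Set.Icc a 1 := ⟨hxa, hx1⟩
      have hgm := gmin x hmem
      rw [← hxW] at hgm
      simp only [hgdef] at hgm
      have hid : ∀ t : ℝ, w t + k * (1 - t) = (w t - k * t) + k := by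
        intro t; ring
      show w (1 - δW / D) + c * δW ≤ w x + c * δ
      rw [hcδ, hcδW, hid, hid]
      linarith
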